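/- Let n ≥ 2 and let R, L, H > 0 satisfy R·L < H. Let φ : ℝ^{n−1} → ℝ be Lipschitz continuous with Lipschitz constant L and satisfy φ(x′) ≥ H for all |x′| ≤ R. Define the bounded open set Ω = {(x′, x_n) ∈ ℝ^{n−1} × ℝ : |x′| < R, −H < x_n < φ(x′)} (the domain below the graph of φ over the ball of radius R, truncated at height −H). Then there exists ρ > 0 such that Ω is starlike with respect to the open ball of radius ρ centered at the origin; indeed, any ρ with 0 < ρ < min( R, H, (H − R·L)/(1+L) ) works. -/

import Mathlib

open MeasureTheory Set

noncomputable section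

/-- The projection onto the first `m` (Euclidean) coordinates of `ℝ^{m+1}`. -/
def firstCoords {m : ℕ} (x : EuclideanSpace ℝ (Fin (m + 1))) : EuclideanSpace ℝ (Fin m) :=
  WithLp.toLp 2 (fun i => x (Fin.castSucc i))

lemma firstCoords_norm_le {m : ℕ} (y : EuclideanSpace ℝ (Fin (m + 1))) :
    ‖firstCoords y‖ ≤ ‖y‖ := by
  rw [EuclideanSpace.norm_eq, EuclideanSpace.norm_eq]
  apply Real.sqrt_le_sqrt
  rw [Fin.sum_univ_castSucc]
  have : ∑ i : Fin m, ‖firstCoords y i‖ ^ 2 = ∑ i : Fin m, ‖y (Fin.castSucc i)‖ ^ 2 := by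
    simp [firstCoords]
  rw [this]
  have : (0:ℝ) ≤ ‖y (Fin.last m)‖ ^ 2 := by positivity
  linarith

lemma abs_last_le {m : ℕ} (y : EuclideanSpace ℝ (Fin (m + 1))) :
    |y (Fin.last m)| ≤ ‖y‖ := by
  rw [EuclideanSpace.norm_eq]
  have h1 : |y (Fin.last m)| = Real.sqrt (‖y (Fin.last m)‖ ^ 2) := by
    rw [Real.sqrt_sq_eq_abs]; simp
  rw [h1]
  apply Real.sqrt_le_sqrt
  exact Finset.single_le_sum (f := fun i => ‖y i‖ ^ 2) (fun i _ => by positivity)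
    (Finset.mem_univ _)

lemma combo_lt {a b c1 c2 r : ℝ} (ha : 0 ≤ a) (hb : 0 ≤ b) (hab : a + b = 1)
    (h1 : c1 < r) (h2 : c2 < r) : a * c1 + b * c2 < r := by
  rcases eq_or_lt_of_le ha with h | h
  · have hb1 : b = 1 := by linarith
    rw [← h, hb1]; linarith
  · have hr : a * r + b * r = r := by rw [← add_mul, hab, one_mul]
    nlinarith [mul_nonneg hb (sub_pos.2 h2).le, mul_pos h (sub_pos.2 h1)]

set_option maxHeartbeats 1000000 in
theorem stmt12 {m : ℕ} (hm : 1 ≤ m) (R L H : ℝ) (hR : 0 < R) (hL : 0 < L) (hH : 0 < H)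
    (hRLH : R * L < H) (φ : EuclideanSpace ℝ (Fin m) → ℝ)
    (hLip : ∀ a b : EuclideanSpace ℝ (Fin m), |φ a - φ b| ≤ L * ‖a - b‖)
    (hφH : ∀ x' : EuclideanSpace ℝ (Fin m), ‖x'‖ ≤ R → H ≤ φ x') :
    (∃ ρ : ℝ, 0 < ρ ∧
      ∀ x ∈ {x : EuclideanSpace ℝ (Fin (m + 1)) |
          ‖firstCoords x‖ < R ∧ -H < x (Fin.last m) ∧ x (Fin.last m) < φ (firstCoords x)},
        convexHull ℝ ({x} ∪ Metric.ball (0 : EuclideanSpace ℝ (Fin (m + 1))) ρ) ⊆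
          {x : EuclideanSpace ℝ (Fin (m + 1)) |
            ‖firstCoords x‖ < R ∧ -H < x (Fin.last m) ∧ x (Fin.last m) < φ (firstCoords x)}) ∧
    (∀ ρ : ℝ, 0 < ρ → ρ < min R (min H ((H - R * L) / (1 + L))) →
      ∀ x ∈ {x : EuclideanSpace ℝ (Fin (m + 1)) |
          ‖firstCoords x‖ < R ∧ -H < x (Fin.last m) ∧ x (Fin.last m) < φ (firstCoords x)},
        convexHull ℝ ({x} ∪ Metric.ball (0 : EuclideanSpace ℝ (Fin (m + 1))) ρ) ⊆
          {x : EuclideanSpace ℝ (Fin (m + 1)) |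
            ‖firstCoords x‖ < R ∧ -H < x (Fin.last m) ∧ x (Fin.last m) < φ (firstCoords x)}) := by
  have h1L : (0:ℝ) < 1 + L := by linarith
  have hHRL : 0 < H - R * L := by linarith
  have key : ∀ ρ : ℝ, 0 < ρ → ρ < min R (min H ((H - R * L) / (1 + L))) →
      ∀ x ∈ {x : EuclideanSpace ℝ (Fin (m + 1)) |
          ‖firstCoords x‖ < R ∧ -H < x (Fin.last m) ∧ x (Fin.last m) < φ (firstCoords x)},
        convexHull ℝ ({x} ∪ Metric.ball (0 : EuclideanSpace ℝ (Fin (m + 1))) ρ) ⊆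
          {x : EuclideanSpace ℝ (Fin (m + 1)) |
            ‖firstCoords x‖ < R ∧ -H < x (Fin.last m) ∧ x (Fin.last m) < φ (firstCoords x)} := by
    intro ρ hρ hρlt x hx z hz
    obtain ⟨hρR, hρH, hρ3⟩ : ρ < R ∧ ρ < H ∧ ρ < (H - R * L) / (1 + L) := by
      rw [lt_min_iff, lt_min_iff] at hρlt; tauto
    have hρ3' : ρ * (1 + L) < H - R * L := by
      rw [lt_div_iff₀ h1L] at hρ3
      linarith
    rw [Set.singleton_union, convexHull_insert ⟨0, Metric.mem_ball_self hρ⟩,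
      (convex_ball (0 : EuclideanSpace ℝ (Fin (m + 1))) ρ).convexHull_eq,
      convexJoin_singleton_left] at hz
    simp only [Set.mem_iUnion, exists_prop] at hz
    obtain ⟨y, hy, hseg⟩ := hz
    rw [mem_ball_zero_iff] at hy
    obtain ⟨a, b, ha, hb, hab, rfl⟩ := hseg
    obtain ⟨hx1, hx2, hx3⟩ := hx
    set x' := firstCoords x with hx'
    set y' := firstCoords y with hy'
    have hy'ρ : ‖y'‖ < ρ := lt_of_le_of_lt (firstCoords_norm_le y) hy
    have hylast : |y (Fin.last m)| < ρ := lt_of_le_of_lt (abs_last_le y) hy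
    have hzfc : firstCoords (a • x + b • y) = a • x' + b • y' := rfl
    have hzlast : (a • x + b • y) (Fin.last m)
        = a * x (Fin.last m) + b * y (Fin.last m) := rfl
    have hnz : ‖a • x' + b • y'‖ ≤ a * ‖x'‖ + b * ‖y'‖ := by
      calc ‖a • x' + b • y'‖ ≤ ‖a • x'‖ + ‖b • y'‖ := norm_add_le _ _
      _ = a * ‖x'‖ + b * ‖y'‖ := by
          rw [norm_smul, norm_smul, Real.norm_eq_abs, Real.norm_eq_abs,
            abs_of_nonneg ha, abs_of_nonneg hb]
    have habs1 : ‖x'‖ < R := hx1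
    have goal1 : ‖a • x' + b • y'‖ < R := by
      have h2 : ‖y'‖ < R := lt_trans hy'ρ hρR
      exact lt_of_le_of_lt hnz (combo_lt ha hb hab habs1 h2)
    have hφx' : H ≤ φ x' := hφH x' habs1.le
    -- Lipschitz bound
    have hdiff : x' - (a • x' + b • y') = b • (x' - y') := by
      have hb1 : b = 1 - a := by linarith
      subst hb1; module
    have hxy : ‖x' - y'‖ ≤ R + ρ := le_trans (norm_sub_le _ _) (by linarith)
    have hnormdiff : ‖x' - (a • x' + b • y')‖ ≤ b * (R + ρ) := by
      rw [hdiff, norm_smul, Real.norm_eq_abs, abs_of_nonneg hb]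
      exact mul_le_mul_of_nonneg_left hxy hb
    have hlip' : φ x' - φ (a • x' + b • y') ≤ L * (b * (R + ρ)) :=
      le_trans (le_trans (le_abs_self _) (hLip x' _))
        (mul_le_mul_of_nonneg_left hnormdiff hL.le)
    have hylast' : y (Fin.last m) < ρ := lt_of_le_of_lt (le_abs_self _) hylast
    have hylast'' : -ρ < y (Fin.last m) := neg_lt_of_abs_lt hylast
    refine ⟨?_, ?_, ?_⟩
    · rw [hzfc]; exact goal1
    · rw [hzlast]
      have h1 : -x (Fin.last m) < H := by linarith
      have h2 : -y (Fin.last m) < H := by linarith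
      have := combo_lt ha hb hab h1 h2
      linarith
    · rw [hzfc, hzlast]
      have hsplit : a * φ x' + b * φ x' = φ x' := by rw [← add_mul, hab, one_mul]
      have hgood : ρ + L * ρ < H - R * L := by linarith
      rcases eq_or_lt_of_le ha with h0 | hapos
      · have hb1 : b = 1 := by linarith
        subst hb1
        rw [← h0]
        have hz1 : (0:ℝ) • x' + (1:ℝ) • y' = y' := by module
        rw [hz1]
        have hlip2 : φ x' - φ y' ≤ L * (R + ρ) :=
          le_trans (le_trans (le_abs_self _) (hLip x' y'))
            (mul_le_mul_of_nonneg_left hxy hL.le)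
        have : ρ < φ y' := by linarith
        linarith
      · have step1 : a * x (Fin.last m) + b * y (Fin.last m) < a * φ x' + b * ρ := by
          have h1 := mul_lt_mul_of_pos_left hx3 hapos
          have h2 := mul_le_mul_of_nonneg_left hylast'.le hb
          linarith
        have hb2 : 0 ≤ b * (φ x' - L * (R + ρ) - ρ) :=
          mul_nonneg hb (by linarith)
        have step2 : a * φ x' + b * ρ ≤ φ (a • x' + b • y') := by
          linarith [hlip', hsplit, hb2]
        linarith
  have hmin : 0 < min R (min H ((H - R * L) / (1 + L))) :=
    lt_min hR (lt_min hH (div_pos hHRL h1L))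
  exact ⟨⟨_, half_pos hmin, key _ (half_pos hmin) (half_lt_self hmin)⟩, key⟩

end
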